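/- No-distillation of incompatibility: for any measurement assemblage {A_{a|x}}, any positive trace-nonincreasing linear map E (a filter), and any bipartite density matrix ρ_AB with p = tr[(E⊗id)(ρ_AB)] > 0, the steerability of the filtered assemblage is bounded by the incompatibility of the original measurements: SR( {tr_A[(A_{a|x}⊗I)(E⊗id)(ρ_AB)]/p} ) ≤ IR(A). -/

import Mathlib

open Matrix Kronecker BigOperators ComplexOrder

noncomputable section

/-- A density matrix: positive semidefinite with unit trace. -/
def IsDensity {d : ℕ} (ρ : Matrix (Fin d) (Fin d) ℂ) : Prop :=
  ρ.PosSemidef ∧ ρ.trace = 1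

/-- A POVM: positive semidefinite effects summing to the identity. -/
def IsPOVM {d nl : ℕ} (G : Fin nl → Matrix (Fin d) (Fin d) ℂ) : Prop :=
  (∀ l, (G l).PosSemidef) ∧ ∑ l, G l = 1

/-- A measurement assemblage: for each setting `x`, a POVM `a ↦ M x a`. -/
def IsMA {d na nx : ℕ} (M : Fin nx → Fin na → Matrix (Fin d) (Fin d) ℂ) : Prop :=
  (∀ x a, (M x a).PosSemidef) ∧ ∀ x, ∑ a, M x a = 1

/-- Joint measurability: `M x a = ∑ λ p(a|x,λ) G λ` for a parent POVM `G`. -/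
def JM {d na nx : ℕ} (M : Fin nx → Fin na → Matrix (Fin d) (Fin d) ℂ) : Prop :=
  ∃ (nl : ℕ) (G : Fin nl → Matrix (Fin d) (Fin d) ℂ)
    (p : Fin nx → Fin na → Fin nl → ℝ),
    IsPOVM G ∧ (∀ x a l, 0 ≤ p x a l) ∧ (∀ x l, ∑ a, p x a l = 1) ∧
    ∀ x a, M x a = ∑ l, (p x a l : ℂ) • G l

/-- A state assemblage: PSD elements with an `x`-independent reduced density matrix. -/
def IsSA {d na nx : ℕ} (σ : Fin nx → Fin na → Matrix (Fin d) (Fin d) ℂ) : Prop :=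
  (∀ x a, (σ x a).PosSemidef) ∧
  ∃ ρ : Matrix (Fin d) (Fin d) ℂ, IsDensity ρ ∧ ∀ x, ∑ a, σ x a = ρ

/-- Local-hidden-state model: `σ x a = ∑ λ q(λ) p(a|x,λ) ρ_λ`. -/
def LHS {d na nx : ℕ} (σ : Fin nx → Fin na → Matrix (Fin d) (Fin d) ℂ) : Prop :=
  ∃ (nl : ℕ) (q : Fin nl → ℝ) (p : Fin nx → Fin na → Fin nl → ℝ)
    (ρ : Fin nl → Matrix (Fin d) (Fin d) ℂ),
    (∀ l, 0 ≤ q l) ∧ (∑ l, q l = 1) ∧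
    (∀ x a l, 0 ≤ p x a l) ∧ (∀ x l, ∑ a, p x a l = 1) ∧
    (∀ l, IsDensity (ρ l)) ∧
    ∀ x a, σ x a = ∑ l, ((q l * p x a l : ℝ) : ℂ) • ρ l

/-- Incompatibility robustness. -/
def IR {d na nx : ℕ} (B : Fin nx → Fin na → Matrix (Fin d) (Fin d) ℂ) : ℝ :=
  sInf {t : ℝ | 0 ≤ t ∧ ∃ N, IsMA N ∧
    JM (fun x a => (((1 + t : ℝ))⁻¹ : ℂ) • (B x a + (t : ℂ) • N x a))}

/-- Steering robustness. -/
def SR {d na nx : ℕ} (σ : Fin nx → Fin na → Matrix (Fin d) (Fin d) ℂ) : ℝ :=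
  sInf {t : ℝ | 0 ≤ t ∧ ∃ ξ, IsSA ξ ∧
    LHS (fun x a => (((1 + t : ℝ))⁻¹ : ℂ) • (σ x a + (t : ℂ) • ξ x a))}

/-- Incompatible weight. -/
def IW {d na nx : ℕ} (B : Fin nx → Fin na → Matrix (Fin d) (Fin d) ℂ) : ℝ :=
  sInf {t : ℝ | 0 ≤ t ∧ t ≤ 1 ∧ ∃ N O, IsMA N ∧ JM O ∧
    ∀ x a, B x a = (t : ℂ) • N x a + ((1 - t : ℝ) : ℂ) • O x a}

/-- Steerable weight. -/
def SW {d na nx : ℕ} (σ : Fin nx → Fin na → Matrix (Fin d) (Fin d) ℂ) : ℝ :=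
  sInf {t : ℝ | 0 ≤ t ∧ t ≤ 1 ∧ ∃ ξ τ, IsSA ξ ∧ LHS τ ∧
    ∀ x a, σ x a = (t : ℂ) • ξ x a + ((1 - t : ℝ) : ℂ) • τ x a}

/-- Positive map on matrices. -/
def PosMap {d : ℕ} (E : Matrix (Fin d) (Fin d) ℂ →ₗ[ℂ] Matrix (Fin d) (Fin d) ℂ) : Prop :=
  ∀ X, X.PosSemidef → (E X).PosSemidef

/-- Trace-nonincreasing on PSD matrices. -/
def TNI {d : ℕ} (E : Matrix (Fin d) (Fin d) ℂ →ₗ[ℂ] Matrix (Fin d) (Fin d) ℂ) : Prop :=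
  ∀ X : Matrix (Fin d) (Fin d) ℂ, X.PosSemidef → (E X).trace.re ≤ X.trace.re

/-- `Ed` is the Hilbert–Schmidt adjoint of `E`. -/
def IsAdjoint {d : ℕ} (E Ed : Matrix (Fin d) (Fin d) ℂ →ₗ[ℂ] Matrix (Fin d) (Fin d) ℂ) : Prop :=
  ∀ X Y, ((E X)ᴴ * Y).trace = (Xᴴ * (Ed Y)).trace

/-- Partial trace over the first tensor factor. -/
def ptraceA {d d' : ℕ} (M : Matrix (Fin d × Fin d') (Fin d × Fin d') ℂ) :
    Matrix (Fin d') (Fin d') ℂ :=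
  Matrix.of fun i j => ∑ k : Fin d, M (k, i) (k, j)

/-- The map `E ⊗ id` acting on bipartite matrices. -/
def tensId {d d' : ℕ} (E : Matrix (Fin d) (Fin d) ℂ →ₗ[ℂ] Matrix (Fin d) (Fin d) ℂ)
    (M : Matrix (Fin d × Fin d') (Fin d × Fin d') ℂ) :
    Matrix (Fin d × Fin d') (Fin d × Fin d') ℂ :=
  Matrix.of fun p q => E (Matrix.of fun i k => M (i, p.2) (k, q.2)) p.1 q.1


section Aux

open Finset

lemma psd_smul_real {n : ℕ} {A : Matrix (Fin n) (Fin n) ℂ} (hA : A.PosSemidef) {c : ℝ}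
    (hc : 0 ≤ c) : (((c : ℝ) : ℂ) • A).PosSemidef := by
  refine Matrix.PosSemidef.of_dotProduct_mulVec_nonneg ?_ ?_
  · unfold Matrix.IsHermitian
    rw [conjTranspose_smul, hA.1.eq]
    congr 1
    simp [Complex.star_def, Complex.conj_ofReal]
  · intro x
    have h := hA.dotProduct_mulVec_nonneg x
    rw [Matrix.smul_mulVec, dotProduct_smul, smul_eq_mul]
    exact mul_nonneg (by exact_mod_cast hc) h

lemma trace_mul_psd_nonneg {n : ℕ} {A B : Matrix (Fin n) (Fin n) ℂ} (hA : A.PosSemidef)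
    (hB : B.PosSemidef) : 0 ≤ (A * B).trace := by
  obtain ⟨C, rfl⟩ : ∃ C : Matrix (Fin n) (Fin n) ℂ, B = Cᴴ * C := by
    open scoped MatrixOrder in
    exact CStarAlgebra.nonneg_iff_eq_star_mul_self.mp hB.nonneg
  rw [← mul_assoc, trace_mul_cycle, Matrix.trace]
  apply Finset.sum_nonneg
  intro i _
  have h := hA.dotProduct_mulVec_nonneg (star (fun k => C i k))
  convert h using 1
  simp only [Matrix.diag_apply, Matrix.mul_apply, dotProduct, Matrix.mulVec,
    Matrix.conjTranspose_apply, Pi.star_apply, star_star, dotProduct,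
    Finset.sum_mul, Finset.mul_sum]
  rw [Finset.sum_comm]
  exact Finset.sum_congr rfl (fun j _ => Finset.sum_congr rfl (fun k _ => by ring))

lemma psd_eq_zero_of_trace {n : ℕ} {A : Matrix (Fin n) (Fin n) ℂ} (hA : A.PosSemidef)
    (h : A.trace = 0) : A = 0 := by
  obtain ⟨C, rfl⟩ : ∃ C : Matrix (Fin n) (Fin n) ℂ, A = Cᴴ * C := by
    open scoped MatrixOrder in
    exact CStarAlgebra.nonneg_iff_eq_star_mul_self.mp hA.nonneg
  have hC : C = 0 := by
    have h2 : ∑ i : Fin n, ∑ j : Fin n, Complex.normSq (C j i) = 0 := by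
      have : (Cᴴ * C).trace = ↑(∑ i : Fin n, ∑ j : Fin n, Complex.normSq (C j i)) := by
        simp only [Matrix.trace, Matrix.diag_apply, Matrix.mul_apply, Matrix.conjTranspose_apply,
          Complex.ofReal_sum]
        congr 1; ext i; congr 1; ext j
        rw [Complex.normSq_eq_conj_mul_self, Complex.star_def]
      rw [this] at h
      exact_mod_cast h
    ext j i
    have h3 := (Finset.sum_eq_zero_iff_of_nonneg (fun i _ => Finset.sum_nonneg
      (fun j _ => Complex.normSq_nonneg _))).mp h2 i (Finset.mem_univ i)
    have h4 := (Finset.sum_eq_zero_iff_of_nonneg (fun j _ => Complex.normSq_nonneg _)).mp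
      h3 j (Finset.mem_univ j)
    simpa using Complex.normSq_eq_zero.mp h4
  rw [hC]; simp

lemma trace_eq_sum_single {n : ℕ} (A : Matrix (Fin n) (Fin n) ℂ) :
    A.trace = ∑ i : Fin n, star (Pi.single i 1) ⬝ᵥ A *ᵥ (Pi.single i 1) := by
  apply Finset.sum_congr rfl
  intro i _
  simp [Matrix.mulVec_single, dotProduct, Pi.single_apply, apply_ite]

lemma psd_trace_nonneg {n : ℕ} {A : Matrix (Fin n) (Fin n) ℂ} (hA : A.PosSemidef) :
    0 ≤ A.trace := by
  rw [trace_eq_sum_single]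
  exact Finset.sum_nonneg fun i _ => hA.dotProduct_mulVec_nonneg _

lemma nonneg_eq_re {z : ℂ} (h : 0 ≤ z) : ((z.re : ℝ) : ℂ) = z := by
  rw [Complex.nonneg_iff] at h
  exact Complex.ext rfl (by simpa using h.2)

lemma psd_sum {n k : ℕ} (s : Finset (Fin k)) (f : Fin k → Matrix (Fin n) (Fin n) ℂ)
    (h : ∀ i, (f i).PosSemidef) : (∑ i ∈ s, f i).PosSemidef := by
  classical
  induction s using Finset.induction with
  | empty => simpa using Matrix.PosSemidef.zero
  | insert _ _ hx ih => rw [Finset.sum_insert hx]; exact (h _).add ih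

lemma quad_expand {n : ℕ} (M : Matrix (Fin n) (Fin n) ℂ) (v : Fin n → ℂ) :
    star v ⬝ᵥ M *ᵥ v = ∑ a : Fin n, ∑ b : Fin n, (starRingEnd ℂ) (v a) * M a b * v b := by
  simp only [dotProduct, Matrix.mulVec, dotProduct, Pi.star_apply,
    Finset.mul_sum, Complex.star_def]
  exact Finset.sum_congr rfl (fun a _ => Finset.sum_congr rfl (fun b _ => by ring))

lemma isHermitian_of_real_quad {n : ℕ} (M : Matrix (Fin n) (Fin n) ℂ)
    (h : ∀ v : Fin n → ℂ, (star v ⬝ᵥ M *ᵥ v).im = 0) : M.IsHermitian := by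
  have hdiag : ∀ i, (M i i).im = 0 := by
    intro i
    have := h (Pi.single i 1)
    rw [quad_expand] at this
    simpa [Pi.single_apply, apply_ite, Finset.sum_ite_eq, Finset.sum_ite_eq'] using this
  have key : ∀ (i j : Fin n) (c : ℂ), i ≠ j →
      ((M i i + c * M i j) + ((starRingEnd ℂ) c * M j i + (starRingEnd ℂ) c * (c * M j j))).im
        = 0 := by
    intro i j c hij
    have := h (Pi.single i 1 + Pi.single j c)
    rw [quad_expand] at this
    have hsum : ∑ a : Fin n, ∑ b : Fin n,
        (starRingEnd ℂ) ((Pi.single i 1 + Pi.single j c : Fin n → ℂ) a) *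
        M a b * ((Pi.single i 1 + Pi.single j c : Fin n → ℂ) b)
        = (M i i + c * M i j) + ((starRingEnd ℂ) c * M j i + (starRingEnd ℂ) c * (c * M j j)) := by
      rw [← Finset.sum_subset (Finset.subset_univ {i, j})
        (by intro a _ ha
            apply Finset.sum_eq_zero
            intro b _
            simp only [Finset.mem_insert, Finset.mem_singleton, not_or] at ha
            simp [Pi.single_apply, ha.1, ha.2])]
      rw [Finset.sum_pair hij]
      congr 1
      · rw [← Finset.sum_subset (Finset.subset_univ {i, j})
          (by intro b _ hb
              simp only [Finset.mem_insert, Finset.mem_singleton, not_or] at hb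
              simp [Pi.single_apply, hb.1, hb.2])]
        rw [Finset.sum_pair hij]
        simp [Pi.single_apply, hij, hij.symm]
        ring
      · rw [← Finset.sum_subset (Finset.subset_univ {i, j})
          (by intro b _ hb
              simp only [Finset.mem_insert, Finset.mem_singleton, not_or] at hb
              simp [Pi.single_apply, hb.1, hb.2])]
        rw [Finset.sum_pair hij]
        simp [Pi.single_apply, hij, hij.symm]
        ring
    rw [hsum] at this
    exact this
  ext i j
  rw [Matrix.conjTranspose_apply]
  by_cases hij : i = j
  · subst hij
    rw [Complex.star_def]
    exact Complex.ext (by simp) (by simp [hdiag i])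
  · have h1 := key j i 1 (Ne.symm hij)
    have h2 := key j i Complex.I (Ne.symm hij)
    simp only [RingHom.map_one, one_mul, Complex.add_im, Complex.add_re, Complex.mul_im,
      Complex.I_re, Complex.I_im, Complex.conj_I, Complex.neg_im, Complex.neg_re,
      Complex.one_re, Complex.one_im, Complex.mul_re] at h1 h2
    have hdj := hdiag j
    have hdi := hdiag i
    rw [Complex.star_def]
    apply Complex.ext
    · simp only [Complex.conj_re]
      nlinarith [h1, h2, hdi, hdj]
    · simp only [Complex.conj_im]
      nlinarith [h1, h2, hdi, hdj]

namespace NoDist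

variable {d d' : ℕ}

/-- The `(i,j)` block of a bipartite matrix. -/
def Rpair (ρAB : Matrix (Fin d × Fin d') (Fin d × Fin d') ℂ) (i j : Fin d') :
    Matrix (Fin d) (Fin d) ℂ :=
  Matrix.of fun a b => ρAB (a, i) (b, j)

def Rv (ρAB : Matrix (Fin d × Fin d') (Fin d × Fin d') ℂ) (v : Fin d' → ℂ) :
    Matrix (Fin d) (Fin d) ℂ :=
  ∑ i, ∑ j, ((starRingEnd ℂ) (v i) * v j) • Rpair ρAB i j

/-- The assemblage map `X ↦ tr_A[(X ⊗ I)(E ⊗ id)(ρ_AB)]`. -/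
def Mmap (E : Matrix (Fin d) (Fin d) ℂ →ₗ[ℂ] Matrix (Fin d) (Fin d) ℂ)
    (ρAB : Matrix (Fin d × Fin d') (Fin d × Fin d') ℂ) (X : Matrix (Fin d) (Fin d) ℂ) :
    Matrix (Fin d') (Fin d') ℂ :=
  ptraceA ((X ⊗ₖ (1 : Matrix (Fin d') (Fin d') ℂ)) * tensId E ρAB)

variable (E : Matrix (Fin d) (Fin d) ℂ →ₗ[ℂ] Matrix (Fin d) (Fin d) ℂ)
    (ρAB : Matrix (Fin d × Fin d') (Fin d × Fin d') ℂ)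

lemma Mmap_apply (X : Matrix (Fin d) (Fin d) ℂ) (i j : Fin d') :
    Mmap E ρAB X i j = ∑ k, ∑ m, X k m * E (Rpair ρAB i j) m k := by
  show ∑ k : Fin d, ((X ⊗ₖ (1 : Matrix (Fin d') (Fin d') ℂ)) * tensId E ρAB) (k, i) (k, j) = _
  simp only [Matrix.mul_apply, Fintype.sum_prod_type, Matrix.kroneckerMap_apply,
    Matrix.one_apply, mul_ite, mul_one, mul_zero, ite_mul, zero_mul,
    Finset.sum_ite_eq, Finset.mem_univ, if_true]
  rfl

lemma trace_mul_eq (X Y : Matrix (Fin d) (Fin d) ℂ) :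
    (X * Y).trace = ∑ k, ∑ m, X k m * Y m k := by
  simp [Matrix.trace, Matrix.mul_apply]

lemma Mmap_apply' (X : Matrix (Fin d) (Fin d) ℂ) (i j : Fin d') :
    Mmap E ρAB X i j = (X * E (Rpair ρAB i j)).trace := by
  rw [Mmap_apply, trace_mul_eq]

lemma Mmap_quad (X : Matrix (Fin d) (Fin d) ℂ) (v : Fin d' → ℂ) :
    star v ⬝ᵥ (Mmap E ρAB X) *ᵥ v = (X * E (Rv ρAB v)).trace := by
  have expand : star v ⬝ᵥ (Mmap E ρAB X) *ᵥ v
      = ∑ i, ∑ j, (starRingEnd ℂ) (v i) * Mmap E ρAB X i j * v j := quad_expand _ v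
  rw [expand]
  have hE : E (Rv ρAB v) = ∑ i, ∑ j, ((starRingEnd ℂ) (v i) * v j) • E (Rpair ρAB i j) := by
    simp only [Rv, map_sum, _root_.map_smul]
  rw [hE]
  simp only [Matrix.mul_sum, Matrix.mul_smul, Matrix.trace_sum, Matrix.trace_smul, smul_eq_mul]
  refine Finset.sum_congr rfl fun i _ => Finset.sum_congr rfl fun j _ => ?_
  rw [Mmap_apply']
  ring

lemma Rv_posSemidef (hρ : ρAB.PosSemidef) (v : Fin d' → ℂ) : (Rv ρAB v).PosSemidef := by
  refine Matrix.PosSemidef.of_dotProduct_mulVec_nonneg ?_ ?_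
  · unfold Matrix.IsHermitian
    ext a b
    simp only [Rv, Matrix.conjTranspose_apply, Matrix.sum_apply, Matrix.smul_apply,
      smul_eq_mul, star_sum, star_mul', Rpair, Matrix.of_apply, Complex.star_def,
      RingHomCompTriple.comp_apply, _root_.map_mul, RingHom.id_apply, Complex.conj_conj]
    rw [Finset.sum_comm]
    refine Finset.sum_congr rfl fun i _ => Finset.sum_congr rfl fun j _ => ?_
    have hc : (starRingEnd ℂ) (ρAB (b, j) (a, i)) = ρAB (a, i) (b, j) := by
      have := hρ.1.eq
      conv_rhs => rw [← this]
      simp [Matrix.conjTranspose_apply, Complex.star_def]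
    rw [hc]
    ring
  · intro w
    have key : star w ⬝ᵥ (Rv ρAB v) *ᵥ w
        = star (fun p : Fin d × Fin d' => w p.1 * v p.2) ⬝ᵥ
          ρAB *ᵥ (fun p : Fin d × Fin d' => w p.1 * v p.2) := by
      simp only [dotProduct, Matrix.mulVec, dotProduct, Pi.star_apply,
        Fintype.sum_prod_type, Rv, Matrix.sum_apply, Matrix.smul_apply, smul_eq_mul,
        Rpair, Matrix.of_apply, Finset.mul_sum, Finset.sum_mul, Complex.star_def,
        _root_.map_mul]
      refine Finset.sum_congr rfl fun a _ => ?_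
      rw [Finset.sum_comm]
      refine Finset.sum_congr rfl fun i _ => Finset.sum_congr rfl fun b _ =>
        Finset.sum_congr rfl fun j _ => by ring
    rw [key]
    exact hρ.dotProduct_mulVec_nonneg _

lemma Mmap_psd (hEpos : PosMap E) (hρ : ρAB.PosSemidef) {X : Matrix (Fin d) (Fin d) ℂ}
    (hX : X.PosSemidef) : (Mmap E ρAB X).PosSemidef := by
  have hq : ∀ v, 0 ≤ star v ⬝ᵥ (Mmap E ρAB X) *ᵥ v := fun v => by
    rw [Mmap_quad]
    exact trace_mul_psd_nonneg hX (hEpos _ (Rv_posSemidef ρAB hρ v))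
  refine Matrix.PosSemidef.of_dotProduct_mulVec_nonneg (isHermitian_of_real_quad _ (fun v => ?_)) hq
  have := hq v
  rw [Complex.nonneg_iff] at this
  exact this.2.symm

lemma Mmap_add (X Y : Matrix (Fin d) (Fin d) ℂ) :
    Mmap E ρAB (X + Y) = Mmap E ρAB X + Mmap E ρAB Y := by
  ext i j
  simp [Mmap_apply', Matrix.add_mul, Matrix.add_apply]

lemma Mmap_smul (c : ℂ) (X : Matrix (Fin d) (Fin d) ℂ) :
    Mmap E ρAB (c • X) = c • Mmap E ρAB X := by
  ext i j
  simp [Mmap_apply', Matrix.smul_mul, Matrix.smul_apply, smul_eq_mul]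

lemma Mmap_sum {k : ℕ} (f : Fin k → Matrix (Fin d) (Fin d) ℂ) :
    Mmap E ρAB (∑ l, f l) = ∑ l, Mmap E ρAB (f l) := by
  ext i j
  simp [Mmap_apply', Matrix.sum_mul, Matrix.sum_apply]

lemma ptraceA_trace (Y : Matrix (Fin d × Fin d') (Fin d × Fin d') ℂ) :
    (ptraceA Y).trace = Y.trace := by
  simp only [ptraceA, Matrix.trace, Matrix.diag_apply, Matrix.of_apply, Fintype.sum_prod_type]
  exact Finset.sum_comm

lemma Mmap_one_trace : (Mmap E ρAB 1).trace = (tensId E ρAB).trace := by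
  unfold Mmap
  rw [Matrix.one_kronecker_one, Matrix.one_mul, ptraceA_trace]

end NoDist

end Aux

open NoDist

/-- no stochastic distillation of incompatibility: the steerability of
the locally filtered assemblage is bounded by the incompatibility of the measurements. -/
theorem no_distillation_incompatibility {d d' na nx : ℕ}
    (A : Fin nx → Fin na → Matrix (Fin d) (Fin d) ℂ) (hA : IsMA A)
    (E : Matrix (Fin d) (Fin d) ℂ →ₗ[ℂ] Matrix (Fin d) (Fin d) ℂ)
    (hE : PosMap E) (hTNI : TNI E)
    (ρAB : Matrix (Fin d × Fin d') (Fin d × Fin d') ℂ)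
    (hρ : ρAB.PosSemidef) (hρ1 : ρAB.trace = 1)
    (hp : 0 < (tensId E ρAB).trace.re) :
    SR (fun x a => ((((tensId E ρAB).trace.re)⁻¹ : ℝ) : ℂ) •
        ptraceA ((A x a ⊗ₖ (1 : Matrix (Fin d') (Fin d') ℂ)) * tensId E ρAB)) ≤ IR A := by
  classical
  have hne : Nonempty (Fin d × Fin d') := by
    by_contra h
    rw [not_nonempty_iff] at h
    rw [Matrix.trace, Finset.univ_eq_empty, Finset.sum_empty] at hρ1
    exact one_ne_zero hρ1.symm
  obtain ⟨⟨i0, j0⟩⟩ := hne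
  set p : ℝ := (tensId E ρAB).trace.re with hpdef
  have hM1psd : (Mmap E ρAB 1).PosSemidef := Mmap_psd E ρAB hE hρ Matrix.PosSemidef.one
  have htr1 : ((p : ℝ) : ℂ) = (Mmap E ρAB 1).trace := by
    rw [hpdef, ← Mmap_one_trace E ρAB]
    exact nonneg_eq_re (psd_trace_nonneg hM1psd)
  have hp' : 0 < p := hp
  have hpne : p ≠ 0 := ne_of_gt hp'
  have hpinv : 0 ≤ p⁻¹ := inv_nonneg.mpr hp'.le
  have hρB : IsDensity (((p⁻¹ : ℝ) : ℂ) • Mmap E ρAB 1) := by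
    refine ⟨psd_smul_real hM1psd hpinv, ?_⟩
    rw [Matrix.trace_smul, ← htr1, smul_eq_mul, ← Complex.ofReal_mul,
      inv_mul_cancel₀ hpne, Complex.ofReal_one]
  unfold SR IR
  refine csInf_le_csInf ⟨0, fun y hy => hy.1⟩ ?_ ?_
  · -- the IR set is nonempty
    by_cases hnx : nx = 0
    · exact ⟨0, le_refl 0, A, hA, 1, (fun _ => 1), (fun _ _ _ => 1),
        ⟨fun _ => Matrix.PosSemidef.one, by simp⟩, fun _ _ _ => zero_le_one,
        fun x _ => absurd x.isLt (by omega), fun x _ => absurd x.isLt (by omega)⟩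
    · obtain ⟨x0⟩ : Nonempty (Fin nx) := ⟨⟨0, Nat.pos_of_ne_zero hnx⟩⟩
      have hna : na ≠ 0 := by
        intro h0
        have hEmp : IsEmpty (Fin na) := h0 ▸ inferInstanceAs (IsEmpty (Fin 0))
        have h1 := hA.2 x0
        rw [Finset.univ_eq_empty, Finset.sum_empty] at h1
        have h2 := congrFun (congrFun h1 i0) i0
        simpa using h2
      have hnaR : (0 : ℝ) < (na : ℝ) := by
        exact_mod_cast Nat.pos_of_ne_zero hna
      have hnaC : ((na : ℝ) : ℂ) ≠ 0 := by
        exact_mod_cast ne_of_gt hnaR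
      have h1naC : (1 : ℂ) + ((na : ℝ) : ℂ) ≠ 0 := by
        have : (0:ℝ) < 1 + (na : ℝ) := by positivity
        exact_mod_cast ne_of_gt this
      refine ⟨(na : ℝ), Nat.cast_nonneg na,
        (fun x a => (((na : ℝ)⁻¹ : ℝ) : ℂ) • (1 - A x a)
          + ((((na : ℝ)⁻¹ * (na : ℝ)⁻¹ : ℝ)) : ℂ) • 1), ⟨?_, ?_⟩, ?_⟩
      · intro x a
        have hsub : ((1 : Matrix (Fin d) (Fin d) ℂ) - A x a).PosSemidef := by
          have h1 := hA.2 x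
          have h2 : (1 : Matrix (Fin d) (Fin d) ℂ) - A x a
              = ∑ a' ∈ Finset.univ.erase a, A x a' := by
            rw [← h1, ← Finset.add_sum_erase _ _ (Finset.mem_univ a)]
            rw [add_sub_cancel_left]
          rw [h2]
          exact psd_sum _ _ (fun i => hA.1 x i)
        exact (psd_smul_real hsub (by positivity)).add
          (psd_smul_real Matrix.PosSemidef.one (by positivity))
      · intro x
        ext i j
        have h1 := congrFun (congrFun (hA.2 x) i) j
        rw [Matrix.sum_apply] at h1
        simp only [Matrix.sum_apply, Matrix.add_apply, Matrix.smul_apply, Matrix.sub_apply,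
          Matrix.one_apply, smul_eq_mul]
        rw [Finset.sum_add_distrib]
        simp only [mul_sub, Finset.sum_sub_distrib, Finset.sum_const, Finset.card_univ,
          Fintype.card_fin, ← Finset.mul_sum, h1, nsmul_eq_mul]
        by_cases hij : i = j
        · subst hij
          simp only [if_pos rfl, Matrix.one_apply_eq]
          push_cast
          field_simp
          ring
        · simp only [if_neg hij, Matrix.one_apply_ne hij]
          simp
      · refine ⟨1, fun _ => 1, fun _ _ _ => (na : ℝ)⁻¹,
          ⟨fun _ => Matrix.PosSemidef.one, by simp⟩,
          fun _ _ _ => by positivity, fun _ _ => ?_, fun x a => ?_⟩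
        · rw [Finset.sum_const, Finset.card_univ, Fintype.card_fin, nsmul_eq_mul]
          field_simp
        · rw [Fin.sum_univ_one]
          ext i j
          simp only [Matrix.smul_apply, Matrix.add_apply, Matrix.sub_apply, Matrix.one_apply,
            smul_eq_mul]
          by_cases hij : i = j
          · subst hij
            simp only [if_pos rfl]
            push_cast
            field_simp
            ring
          · simp only [if_neg hij]
            push_cast
            field_simp [h1naC]
            ring
  · -- inclusion of the IR set into the SR set
    rintro t ⟨ht0, N, hN, nl, G, pr, hG, hpr0, hpr1, heq⟩
    have hMptr : ∀ x a, ptraceA ((A x a ⊗ₖ (1 : Matrix (Fin d') (Fin d') ℂ)) * tensId E ρAB)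
        = Mmap E ρAB (A x a) := fun _ _ => rfl
    refine ⟨ht0, fun x a => ((p⁻¹ : ℝ) : ℂ) • Mmap E ρAB (N x a), ⟨?_, ?_⟩, ?_⟩
    · exact fun x a => psd_smul_real (Mmap_psd E ρAB hE hρ (hN.1 x a)) hpinv
    · refine ⟨((p⁻¹ : ℝ) : ℂ) • Mmap E ρAB 1, hρB, fun x => ?_⟩
      rw [← Finset.smul_sum, ← Mmap_sum, hN.2 x]
    · -- the LHS model
      set r : Fin nl → ℝ := fun l => (Mmap E ρAB (G l)).trace.re with hrdef
      have hGpsd : ∀ l, (Mmap E ρAB (G l)).PosSemidef :=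
        fun l => Mmap_psd E ρAB hE hρ (hG.1 l)
      have hrtr : ∀ l, ((r l : ℝ) : ℂ) = (Mmap E ρAB (G l)).trace :=
        fun l => nonneg_eq_re (psd_trace_nonneg (hGpsd l))
      have hr0 : ∀ l, 0 ≤ r l := fun l => by
        have h := psd_trace_nonneg (hGpsd l)
        rw [Complex.nonneg_iff] at h
        exact h.1
      refine ⟨nl, fun l => p⁻¹ * r l, pr,
        fun l => if _ : r l = 0 then ((p⁻¹ : ℝ) : ℂ) • Mmap E ρAB 1
          else (((r l)⁻¹ : ℝ) : ℂ) • Mmap E ρAB (G l),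
        fun l => mul_nonneg hpinv (hr0 l), ?_, hpr0, hpr1, fun l => ?_, fun x a => ?_⟩
      · rw [← Finset.mul_sum]
        have hsum : ∑ l, r l = p := by
          rw [hrdef]
          rw [← Complex.re_sum, ← Matrix.trace_sum, ← Mmap_sum, hG.2, Mmap_one_trace]
        rw [hsum, inv_mul_cancel₀ hpne]
      · simp only []
        by_cases h : r l = 0
        · rw [dif_pos h]
          exact hρB
        · rw [dif_neg h]
          refine ⟨psd_smul_real (hGpsd l) (inv_nonneg.mpr (hr0 l)), ?_⟩
          rw [Matrix.trace_smul, ← hrtr l, smul_eq_mul, ← Complex.ofReal_mul,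
            inv_mul_cancel₀ h, Complex.ofReal_one]
      · -- the key equation
        simp only []
        have hkey : (((1 + t : ℝ))⁻¹ : ℂ) • (Mmap E ρAB (A x a) + (t : ℂ) • Mmap E ρAB (N x a))
            = ∑ l, (pr x a l : ℂ) • Mmap E ρAB (G l) := by
          have h1 := congrArg (Mmap E ρAB) (heq x a)
          rw [Mmap_smul, Mmap_add, Mmap_smul, Mmap_sum] at h1
          simp only [Mmap_smul] at h1
          exact h1
        rw [hMptr x a]
        calc (((1 + t : ℝ))⁻¹ : ℂ) • (((p⁻¹ : ℝ) : ℂ) • Mmap E ρAB (A x a)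
              + (t : ℂ) • ((p⁻¹ : ℝ) : ℂ) • Mmap E ρAB (N x a))
            = ((p⁻¹ : ℝ) : ℂ) • ((((1 + t : ℝ))⁻¹ : ℂ)
              • (Mmap E ρAB (A x a) + (t : ℂ) • Mmap E ρAB (N x a))) := by
              simp only [smul_add, smul_smul]
              congr 1 <;> ring_nf
          _ = ((p⁻¹ : ℝ) : ℂ) • ∑ l, (pr x a l : ℂ) • Mmap E ρAB (G l) := by rw [hkey]
          _ = ∑ l, ((p⁻¹ * r l * pr x a l : ℝ) : ℂ) • (if _ : r l = 0
                then ((p⁻¹ : ℝ) : ℂ) • Mmap E ρAB 1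
                else (((r l)⁻¹ : ℝ) : ℂ) • Mmap E ρAB (G l)) := by
              rw [Finset.smul_sum]
              refine Finset.sum_congr rfl fun l _ => ?_
              by_cases h : r l = 0
              · have hz : Mmap E ρAB (G l) = 0 := by
                  refine psd_eq_zero_of_trace (hGpsd l) ?_
                  rw [← hrtr l, h, Complex.ofReal_zero]
                rw [dif_pos h, hz, h]
                simp
              · rw [dif_neg h, smul_smul, smul_smul]
                congr 1
                push_cast
                field_simp
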